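/- If P is a positive program, Q an arbitrary program, and the total A-SE-models of P and Q coincide, then every A-SE-model of P is an A-SE-model of Q. Consequently, for positive programs P and Q, relative strong equivalence P ≡ˢ_A Q, relative uniform equivalence P ≡ᵘ_A Q, and coincidence of total A-SE-models are all equivalent. -/

import Mathlib

structure Rule where
  head : Finset ℕ
  pos : Finset ℕ
  neg : Finset ℕ

abbrev Interp := Set ℕ
abbrev Program := Set Rule

/-- Classical satisfaction of a rule by an interpretation. -/
def Rule.satisfied (I : Interp) (r : Rule) : Prop :=
  ((↑r.pos ⊆ I) ∧ ∀ a ∈ r.neg, a ∉ I) → ∃ a ∈ r.head, a ∈ I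

/-- `I` is a classical model of the program `P`. -/
def Models (I : Interp) (P : Program) : Prop := ∀ r ∈ P, Rule.satisfied I r

/-- `X` models the Gelfond-Lifschitz reduct `P^Y`. -/
def ModelsReduct (X : Interp) (P : Program) (Y : Interp) : Prop :=
  ∀ r ∈ P, (∀ a ∈ r.neg, a ∉ Y) → (↑r.pos ⊆ X) → ∃ a ∈ r.head, a ∈ X

/-- `Y` is an answer set of `P`: a minimal model of the reduct `P^Y`. -/
def AnswerSet (P : Program) (Y : Interp) : Prop :=
  ModelsReduct Y P Y ∧ ∀ Z : Interp, Z ⊂ Y → ¬ ModelsReduct Z P Y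

/-- `(X,Y)` is an SE-model of `P`. -/
def SEModel (P : Program) (X Y : Interp) : Prop :=
  X ⊆ Y ∧ Models Y P ∧ ModelsReduct X P Y

/-- `(X,Y)` is a UE-model of `P`. -/
def UEModel (P : Program) (X Y : Interp) : Prop :=
  SEModel P X Y ∧ ∀ X', SEModel P X' Y → X ⊂ X' → X' = Y

/-- The program consisting of the atoms in `F` as facts. -/
def Facts (F : Set ℕ) : Program := { r | ∃ a ∈ F, r = ⟨{a}, ∅, ∅⟩ }

/-- Uniform equivalence of programs. -/
def UnifEquiv (P Q : Program) : Prop :=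
  ∀ F : Set ℕ, ∀ Y : Interp, AnswerSet (P ∪ Facts F) Y ↔ AnswerSet (Q ∪ Facts F) Y

/-- Strong equivalence of programs. -/
def StrongEquiv (P Q : Program) : Prop :=
  ∀ R : Program, ∀ Y : Interp, AnswerSet (P ∪ R) Y ↔ AnswerSet (Q ∪ R) Y

def Rule.atoms (r : Rule) : Finset ℕ := r.head ∪ r.pos ∪ r.neg

/-- All atoms occurring in `R` belong to `A`. -/
def ProgramOver (A : Set ℕ) (R : Program) : Prop := ∀ r ∈ R, ↑r.atoms ⊆ A

/-- Strong equivalence relative to a set of atoms `A`. -/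
def RelStrongEquiv (A : Set ℕ) (P Q : Program) : Prop :=
  ∀ R : Program, ProgramOver A R →
    ∀ Y : Interp, AnswerSet (P ∪ R) Y ↔ AnswerSet (Q ∪ R) Y

/-- Uniform equivalence relative to a set of atoms `A`. -/
def RelUnifEquiv (A : Set ℕ) (P Q : Program) : Prop :=
  ∀ F : Set ℕ, F ⊆ A →
    ∀ Y : Interp, AnswerSet (P ∪ Facts F) Y ↔ AnswerSet (Q ∪ Facts F) Y

/-- A unary rule: one head atom, no negation, at most one positive body atom. -/
def Unary (r : Rule) : Prop := r.head.card = 1 ∧ r.neg = ∅ ∧ r.pos.card ≤ 1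

/-- `(X,Y)` is a (relativized) `A`-SE-model of `P`. -/
def ASEModel (A : Set ℕ) (P : Program) (X Y : Interp) : Prop :=
  (X = Y ∨ X ⊂ Y ∩ A) ∧ Models Y P ∧
  (∀ Y' : Interp, Y' ⊂ Y → Y' ∩ A = Y ∩ A → ¬ ModelsReduct Y' P Y) ∧
  (X ⊂ Y → ∃ X' : Interp, X' ⊆ Y ∧ X' ∩ A = X ∧ ModelsReduct X' P Y)

/-- `(X,Y)` is a (relativized) `A`-UE-model of `P`. -/
def AUEModel (A : Set ℕ) (P : Program) (X Y : Interp) : Prop :=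
  ASEModel A P X Y ∧ ∀ X', ASEModel A P X' Y → X ⊂ X' → X' = Y

/-- A positive program: all rules have empty negative body. -/
def Positive (P : Program) : Prop := ∀ r ∈ P, r.neg = ∅

/-- Positive dependency: edge from a positive body atom to a head atom. -/
def Dep (P : Program) (a b : ℕ) : Prop := ∃ r ∈ P, a ∈ r.pos ∧ b ∈ r.head

/-- Head-cycle freeness: no directed cycle of the positive dependency graph
through two distinct head atoms of one rule. -/
def HCF (P : Program) : Prop :=
  ∀ r ∈ P, ∀ a ∈ r.head, ∀ b ∈ r.head, a ≠ b →
    ¬ (Relation.ReflTransGen (Dep P) a b ∧ Relation.ReflTransGen (Dep P) b a)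

/-- The shift of a single rule. -/
def Rule.shift (r : Rule) : Program :=
  if r.head = ∅ then {r}
  else { r' | ∃ a ∈ r.head, r' = ⟨{a}, r.pos, r.neg ∪ (r.head.erase a)⟩ }

/-- The shift of a program. -/
def shiftProg (P : Program) : Program := ⋃ r ∈ P, r.shift

/-- The set of SE-models of `P` as a set of pairs. -/
def SEset (P : Program) : Set (Interp × Interp) := { p | SEModel P p.1 p.2 }

lemma models_iff_reduct_self {P : Program} {Y : Interp} :
    Models Y P ↔ ModelsReduct Y P Y := by
  constructor
  · intro h r hr hneg hpos; exact h r hr ⟨hpos, hneg⟩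
  · intro h r hr hb; exact h r hr hb.2 hb.1

lemma modelsReduct_of_models {Q : Program} {X Y : Interp}
    (h : Models X Q) (hXY : X ⊆ Y) : ModelsReduct X Q Y := by
  intro r hr hneg hpos
  exact h r hr ⟨hpos, fun a ha hax => hneg a ha (hXY hax)⟩

lemma reduct_pos {P : Program} (hP : Positive P) {X Y : Interp} :
    ModelsReduct X P Y ↔ Models X P := by
  constructor
  · intro h r hr hb
    exact h r hr (by simp [hP r hr]) hb.1
  · intro h r hr _ hpos
    exact h r hr ⟨hpos, by simp [hP r hr]⟩

lemma reduct_union {P R : Program} {Z Y : Interp} :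
    ModelsReduct Z (P ∪ R) Y ↔ ModelsReduct Z P Y ∧ ModelsReduct Z R Y := by
  constructor
  · exact fun h => ⟨fun r hr => h r (Or.inl hr), fun r hr => h r (Or.inr hr)⟩
  · rintro ⟨h1, h2⟩ r (hr | hr)
    exacts [h1 r hr, h2 r hr]

lemma reduct_facts {F : Set ℕ} {Z Y : Interp} :
    ModelsReduct Z (Facts F) Y ↔ F ⊆ Z := by
  constructor
  · intro h a haF
    obtain ⟨b, hb, hbZ⟩ := h ⟨{a}, ∅, ∅⟩ ⟨a, haF, rfl⟩ (by simp) (by simp)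
    simp only [Finset.mem_singleton] at hb
    subst hb; exact hbZ
  · rintro h r ⟨a, haF, rfl⟩ _ _
    exact ⟨a, by simp, h haF⟩

lemma facts_over {A F : Set ℕ} (hFA : F ⊆ A) : ProgramOver A (Facts F) := by
  rintro r ⟨a, haF, rfl⟩ x hx
  simp [Rule.atoms] at hx
  subst hx
  exact hFA haF

lemma pos_subset_of_over {A : Set ℕ} {R : Program} (hR : ProgramOver A R) {r : Rule}
    (hr : r ∈ R) : ↑r.pos ⊆ A := by
  intro a ha
  apply hR r hr
  simp only [Rule.atoms, Finset.coe_union, Set.mem_union]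
  exact Or.inl (Or.inr ha)

lemma head_subset_of_over {A : Set ℕ} {R : Program} (hR : ProgramOver A R) {r : Rule}
    (hr : r ∈ R) : ↑r.head ⊆ A := by
  intro a ha
  apply hR r hr
  simp only [Rule.atoms, Finset.coe_union, Set.mem_union]
  exact Or.inl (Or.inl ha)

lemma exists_minimal_model {P : Program} (hP : Positive P) {Y X A : Set ℕ}
    {X₀ : Interp} (h0 : X₀ ⊆ Y ∧ X₀ ∩ A = X ∧ Models X₀ P) :
    ∃ M, (M ⊆ Y ∧ M ∩ A = X ∧ Models M P) ∧
      ∀ N, (N ⊆ Y ∧ N ∩ A = X ∧ Models N P) → N ⊆ M → N = M := by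
  set S : Set (Set ℕ) := {M | M ⊆ Y ∧ M ∩ A = X ∧ Models M P} with hS
  have hXA : X ⊆ A := by rw [← h0.2.1]; exact Set.inter_subset_right
  have H : ∀ c ⊆ S, IsChain (· ⊆ ·) c → c.Nonempty → ∃ lb ∈ S, ∀ s ∈ c, lb ⊆ s := by
    intro c hcS hchain ⟨M₀, hM₀⟩
    have hXmem : ∀ M ∈ c, X ⊆ M := by
      intro M hM
      rw [← (hcS hM).2.1]; exact Set.inter_subset_left.trans' (by rw [(hcS hM).2.1])
    refine ⟨⋂₀ c, ⟨?_, ?_, ?_⟩, fun s hs => Set.sInter_subset_of_mem hs⟩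
    · exact (Set.sInter_subset_of_mem hM₀).trans (hcS hM₀).1
    · apply Set.Subset.antisymm
      · intro a ha
        rw [← (hcS hM₀).2.1]
        exact ⟨Set.sInter_subset_of_mem hM₀ ha.1, ha.2⟩
      · intro a ha
        refine ⟨Set.mem_sInter.2 fun M hM => ?_, hXA ha⟩
        rw [← (hcS hM).2.1] at ha
        exact ha.1
    · intro r hr hb
      obtain ⟨hpos, -⟩ := hb
      -- find a head atom that lies in every member of the chain
      have hTfin : ((fun M => (↑r.head : Set ℕ) ∩ M) '' c).Finite := by
        apply Set.Finite.subset (Set.Finite.finite_subsets (r.head.finite_toSet))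
        rintro t ⟨M, -, rfl⟩
        exact Set.inter_subset_left
      obtain ⟨M₁, hM₁c, hM₁min⟩ :=
        Set.Finite.exists_minimalFor' (fun M => (↑r.head : Set ℕ) ∩ M) c hTfin ⟨M₀, hM₀⟩
      have hposM₁ : ↑r.pos ⊆ M₁ := fun a ha => Set.sInter_subset_of_mem hM₁c (hpos ha)
      obtain ⟨a, hah, haM₁⟩ := (hcS hM₁c).2.2 r hr ⟨hposM₁, by simp [hP r hr]⟩
      refine ⟨a, hah, Set.mem_sInter.2 fun M hM => ?_⟩
      rcases eq_or_ne M M₁ with rfl | hne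
      · exact haM₁
      · rcases hchain hM hM₁c hne with h' | h'
        · have : (↑r.head : Set ℕ) ∩ M₁ = (↑r.head : Set ℕ) ∩ M := Set.Subset.antisymm (hM₁min hM (Set.inter_subset_inter_right _ h'))
              (Set.inter_subset_inter_right _ h')
          have : a ∈ (↑r.head : Set ℕ) ∩ M := this ▸ ⟨hah, haM₁⟩
          exact this.2
        · exact h' haM₁
  obtain ⟨m, -, hm⟩ := zorn_superset_nonempty S H X₀ h0
  exact ⟨m, hm.prop, fun N hN hNm => Set.Subset.antisymm hNm (hm.le_of_le hN hNm)⟩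

lemma part1 {A : Set ℕ} {P Q : Program} (hP : Positive P)
    (htot : ∀ Y : Interp, ASEModel A P Y Y ↔ ASEModel A Q Y Y) :
    ∀ X Y : Interp, ASEModel A P X Y → ASEModel A Q X Y := by
  rintro X Y ⟨h1, h2, h3, h4⟩
  have hYY : ASEModel A Q Y Y :=
    (htot Y).mp ⟨Or.inl rfl, h2, h3, fun h => absurd rfl h.ne⟩
  refine ⟨h1, hYY.2.1, hYY.2.2.1, ?_⟩
  intro hXY
  obtain ⟨X₀, hX₀Y, hX₀A, hX₀M⟩ := h4 hXY
  have hX₀P : Models X₀ P := (reduct_pos hP).mp hX₀M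
  obtain ⟨M, hM, hMmin⟩ := exists_minimal_model hP ⟨hX₀Y, hX₀A, hX₀P⟩
  have hMSE : ASEModel A P M M := by
    refine ⟨Or.inl rfl, hM.2.2, ?_, fun h => absurd rfl h.ne⟩
    intro Y' hY' hY'A hY'M
    have hY'P : Models Y' P := (reduct_pos hP).mp hY'M
    have : Y' = M := hMmin Y' ⟨hY'.subset.trans hM.1, by rw [hY'A, hM.2.1], hY'P⟩ hY'.subset
    exact hY'.ne this
  have hMQ : ASEModel A Q M M := (htot M).mp hMSE
  exact ⟨M, hM.1, hM.2.1, modelsReduct_of_models hMQ.2.1 hM.1⟩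

lemma tot_of_unif {A : Set ℕ} {P Q : Program} (hu : RelUnifEquiv A P Q)
    {Y : Interp} (h : ASEModel A P Y Y) : ASEModel A Q Y Y := by
  obtain ⟨-, h2, h3, -⟩ := h
  have hans : AnswerSet (P ∪ Facts (Y ∩ A)) Y := by
    constructor
    · exact reduct_union.mpr ⟨models_iff_reduct_self.mp h2,
        reduct_facts.mpr Set.inter_subset_left⟩
    · intro Z hZ hZm
      rw [reduct_union, reduct_facts] at hZm
      obtain ⟨hZP, hZF⟩ := hZm
      have hZA : Z ∩ A = Y ∩ A := Set.Subset.antisymm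
        (Set.inter_subset_inter_left A hZ.subset)
        (Set.subset_inter hZF Set.inter_subset_right)
      exact h3 Z hZ hZA hZP
  obtain ⟨hm, hmin⟩ := (hu (Y ∩ A) Set.inter_subset_right Y).mp hans
  rw [reduct_union] at hm
  refine ⟨Or.inl rfl, models_iff_reduct_self.mpr hm.1, ?_, fun h => absurd rfl h.ne⟩
  intro Y' hY' hYA hYm
  apply hmin Y' hY'
  rw [reduct_union, reduct_facts]
  exact ⟨hYm, by rw [← hYA]; exact Set.inter_subset_left⟩

lemma answer_transfer {A : Set ℕ} {P Q : Program}
    (hase : ∀ X Y : Interp, ASEModel A P X Y ↔ ASEModel A Q X Y)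
    {R : Program} (hR : ProgramOver A R) {Y : Interp}
    (h : AnswerSet (P ∪ R) Y) : AnswerSet (Q ∪ R) Y := by
  obtain ⟨hm, hmin⟩ := h
  rw [reduct_union] at hm
  obtain ⟨hmP, hmR⟩ := hm
  have hPYY : ASEModel A P Y Y := by
    refine ⟨Or.inl rfl, models_iff_reduct_self.mpr hmP, ?_, fun h => absurd rfl h.ne⟩
    intro Y' hY' hYA hYm
    apply hmin Y' hY'
    refine reduct_union.mpr ⟨hYm, ?_⟩
    intro r hr hneg hpos
    have hposY : ↑r.pos ⊆ Y := by
      intro a ha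
      have : a ∈ Y' ∩ A := ⟨hpos ha, pos_subset_of_over hR hr ha⟩
      rw [hYA] at this; exact this.1
    obtain ⟨a, hah, haY⟩ := hmR r hr hneg hposY
    have : a ∈ Y' ∩ A := by rw [hYA]; exact ⟨haY, head_subset_of_over hR hr hah⟩
    exact ⟨a, hah, this.1⟩
  have hQYY : ASEModel A Q Y Y := (hase Y Y).mp hPYY
  constructor
  · exact reduct_union.mpr ⟨models_iff_reduct_self.mp hQYY.2.1, hmR⟩
  · intro Z hZ hZm
    rw [reduct_union] at hZm
    obtain ⟨hZQ, hZR⟩ := hZm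
    rcases eq_or_ne (Z ∩ A) (Y ∩ A) with hZA | hZA
    · exact hQYY.2.2.1 Z hZ hZA hZQ
    · have hss : Z ∩ A ⊂ Y ∩ A :=
        ⟨Set.inter_subset_inter_left A hZ.subset, fun h =>
          hZA (Set.Subset.antisymm (Set.inter_subset_inter_left A hZ.subset) h)⟩
      have hZAY : Z ∩ A ⊂ Y := by
        refine ⟨Set.inter_subset_left.trans hZ.subset, fun h => ?_⟩
        exact hZ.ne (Set.Subset.antisymm hZ.subset (h.trans Set.inter_subset_left))
      have hQXY : ASEModel A Q (Z ∩ A) Y :=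
        ⟨Or.inr hss, hQYY.2.1, hQYY.2.2.1, fun _ => ⟨Z, hZ.subset, rfl, hZQ⟩⟩
      have hPXY : ASEModel A P (Z ∩ A) Y := (hase _ Y).mpr hQXY
      obtain ⟨X', hX'Y, hX'A, hX'P⟩ := hPXY.2.2.2 hZAY
      have hX'R : ModelsReduct X' R Y := by
        intro r hr hneg hpos
        have hposZ : ↑r.pos ⊆ Z := by
          intro a ha
          have : a ∈ X' ∩ A := ⟨hpos ha, pos_subset_of_over hR hr ha⟩
          rw [hX'A] at this; exact this.1
        obtain ⟨a, hah, haZ⟩ := hZR r hr hneg hposZ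
        have : a ∈ X' ∩ A := by
          rw [hX'A]; exact ⟨haZ, head_subset_of_over hR hr hah⟩
        exact ⟨a, hah, this.1⟩
      have hX'ne : X' ≠ Y := fun h => hss.ne (by rw [← hX'A, h])
      exact hmin X' (Set.ssubset_iff_subset_ne.mpr ⟨hX'Y, hX'ne⟩)
        (reduct_union.mpr ⟨hX'P, hX'R⟩)

theorem stmt15 (A : Set ℕ) :
    (∀ P Q : Program, Positive P →
        (∀ Y : Interp, ASEModel A P Y Y ↔ ASEModel A Q Y Y) →
        ∀ X Y : Interp, ASEModel A P X Y → ASEModel A Q X Y) ∧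
    (∀ P Q : Program, Positive P → Positive Q →
        ((RelStrongEquiv A P Q ↔ RelUnifEquiv A P Q) ∧
         (RelStrongEquiv A P Q ↔
            ∀ Y : Interp, ASEModel A P Y Y ↔ ASEModel A Q Y Y))) := by
  
  refine ⟨fun P Q hP htot => part1 hP htot, ?_⟩
  intro P Q hP hQ
  have strong_imp_unif : RelStrongEquiv A P Q → RelUnifEquiv A P Q :=
    fun hs F hF Y => hs (Facts F) (facts_over hF) Y
  have unif_imp_tot : RelUnifEquiv A P Q →
      ∀ Y : Interp, (ASEModel A P Y Y ↔ ASEModel A Q Y Y) :=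
    fun hu Y => ⟨tot_of_unif hu, tot_of_unif (fun F hF Y => (hu F hF Y).symm)⟩
  have tot_imp_strong : (∀ Y : Interp, ASEModel A P Y Y ↔ ASEModel A Q Y Y) →
      RelStrongEquiv A P Q := by
    intro ht
    have hase : ∀ X Y : Interp, ASEModel A P X Y ↔ ASEModel A Q X Y :=
      fun X Y => ⟨part1 hP ht X Y, part1 hQ (fun Y => (ht Y).symm) X Y⟩
    intro R hR Y
    exact ⟨answer_transfer hase hR, answer_transfer (fun X Y => (hase X Y).symm) hR⟩
  constructor
  · exact ⟨fun hs => strong_imp_unif hs, fun hu => tot_imp_strong (unif_imp_tot hu)⟩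
  · exact ⟨fun hs => unif_imp_tot (strong_imp_unif hs), tot_imp_strong⟩
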